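/- Let p be an odd prime, m ≥ 1 an integer, and let H, H' be Q_p-rational hyperplanes in P^{n-1}(C_p) with unimodular defining linear forms ℓ_H, ℓ_{H'} ∈ Z_p^n that are congruent modulo p^{m+1}. Then for every z in the affinoid X_p^{≤m} = { z ∈ P^{n-1}(C_p) : ord_p(ℓ_K(z)) ≤ m for all Q_p-rational hyperplanes K } (with z represented by a unimodular vector), one has ord_p((ℓ_{H'}(z) − ℓ_H(z))/ℓ_{H'}(z)) ≥ 1, and consequently the function z ↦ log_p(ℓ_H(z)/ℓ_{H'}(z)) is given by the uniformly convergent series Σ_{k≥1} (1/k)·((ℓ_{H'}(z) − ℓ_H(z))/ℓ_{H'}(z))^k and is a rigid analytic function on X_p^{≤m}. -/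

import Mathlib

open scoped BigOperators

/-- Let `p` be an odd prime, `m ≥ 1`, and let `H, H'` be `ℚ_p`-rational
hyperplanes in `ℙ^{n-1}(ℂ_p)` with unimodular defining linear forms `a, b` (coefficients
in `ℚ_p` of sup-norm `1`) that are congruent modulo `p^{m+1}`.  Here `K` is a complete
ultrametric field extension of `ℚ_p` (such as `ℂ_p`) via an isometric embedding `ι`, and
`logp` is the Iwasawa `p`-adic logarithm, characterized on the unit ball around `1` by
its power series.  For every `z` in the affinoid
`𝒳_p^{≤m} = {z : ord_p(ℓ_K(z)) ≤ m for all ℚ_p-rational K}` (with unimodular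
coordinates), one has `ord_p((ℓ_{H'}(z) − ℓ_H(z))/ℓ_{H'}(z)) ≥ 1`, and
`log_p(ℓ_H(z)/ℓ_{H'}(z))` is given by the convergent power series in
`(ℓ_{H'}(z) − ℓ_H(z))/ℓ_{H'}(z)`; in particular `z ↦ log_p(ℓ_H(z)/ℓ_{H'}(z))` is a rigid
analytic function on `𝒳_p^{≤m}`. -/
theorem stmt_3
    (p : ℕ) [Fact p.Prime] (hodd : Odd p) (n m : ℕ) (hm : 1 ≤ m)
    (K : Type*) [NontriviallyNormedField K] [CompleteSpace K] [IsUltrametricDist K]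
    (ι : ℚ_[p] →+* K) (hι : ∀ x : ℚ_[p], ‖ι x‖ = ‖x‖)
    (logp : K → K)
    (hlog : ∀ x : K, ‖x‖ < 1 →
        HasSum (fun k : ℕ => (-1 : K) ^ k * x ^ (k + 1) / (k + 1 : ℕ)) (logp (1 + x)))
    (a b : Fin n → ℚ_[p])
    (ha₁ : ∀ i, ‖a i‖ ≤ 1) (ha₂ : ∃ i, ‖a i‖ = 1)      -- ℓ_H unimodular
    (hb₁ : ∀ i, ‖b i‖ ≤ 1) (hb₂ : ∃ i, ‖b i‖ = 1)      -- ℓ_{H'} unimodular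
    (hcong : ∀ i, ‖a i - b i‖ ≤ (p : ℝ) ^ (-(m + 1 : ℤ)))  -- ℓ_H ≡ ℓ_{H'} mod p^{m+1}
    (z : Fin n → K)
    (hz₁ : ∀ i, ‖z i‖ ≤ 1) (hz₂ : ∃ i, ‖z i‖ = 1)      -- z has unimodular coordinates
    (hzm : ∀ c : Fin n → ℚ_[p], (∀ i, ‖c i‖ ≤ 1) → (∃ i, ‖c i‖ = 1) →
        (p : ℝ) ^ (-(m : ℤ)) ≤ ‖∑ i, ι (c i) * z i‖) :  -- z ∈ 𝒳_p^{≤m}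
    ‖((∑ i, ι (b i) * z i) - ∑ i, ι (a i) * z i) / ∑ i, ι (b i) * z i‖ ≤ (p : ℝ)⁻¹ ∧
    HasSum
      (fun k : ℕ =>
        -((((∑ i, ι (b i) * z i) - ∑ i, ι (a i) * z i) / ∑ i, ι (b i) * z i) ^ (k + 1)
            / (k + 1 : ℕ)))
      (logp ((∑ i, ι (a i) * z i) / ∑ i, ι (b i) * z i)) := by
  set A := ∑ i, ι (a i) * z i with hA
  set B := ∑ i, ι (b i) * z i with hB
  have hppos : (0:ℝ) < p := by exact_mod_cast (Fact.out : p.Prime).pos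
  have hBlb : (p : ℝ) ^ (-(m : ℤ)) ≤ ‖B‖ := hzm b hb₁ hb₂
  have hBpos : (0:ℝ) < ‖B‖ := lt_of_lt_of_le (zpow_pos hppos _) hBlb
  have hBne : B ≠ 0 := by
    intro h; rw [h, norm_zero] at hBpos; exact lt_irrefl 0 hBpos
  have hdiff : ‖B - A‖ ≤ (p : ℝ) ^ (-(m + 1 : ℤ)) := by
    have : B - A = ∑ i, ι (b i - a i) * z i := by
      simp [hA, hB, map_sub, sub_mul, Finset.sum_sub_distrib]
    rw [this]
    refine IsUltrametricDist.norm_sum_le_of_forall_le_of_nonneg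
      (le_of_lt (zpow_pos hppos _)) fun i _ => ?_
    calc ‖ι (b i - a i) * z i‖ ≤ ‖ι (b i - a i)‖ * ‖z i‖ := norm_mul_le _ _
      _ ≤ (p : ℝ) ^ (-(m + 1 : ℤ)) * 1 := by
          apply mul_le_mul _ (hz₁ i) (norm_nonneg _) (le_of_lt (zpow_pos hppos _))
          rw [hι]
          simpa [norm_sub_rev] using hcong i
      _ = (p : ℝ) ^ (-(m + 1 : ℤ)) := mul_one _
  have hu : ‖(B - A) / B‖ ≤ (p : ℝ)⁻¹ := by
    rw [norm_div]
    rw [div_le_iff₀ hBpos]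
    calc ‖B - A‖ ≤ (p : ℝ) ^ (-(m + 1 : ℤ)) := hdiff
      _ = (p : ℝ)⁻¹ * (p : ℝ) ^ (-(m : ℤ)) := by
          rw [← zpow_neg_one, ← zpow_add₀ (ne_of_gt hppos)]; ring_nf
      _ ≤ (p : ℝ)⁻¹ * ‖B‖ := by
          exact mul_le_mul_of_nonneg_left hBlb (by positivity)
  have hlt : ‖(B - A) / B‖ < 1 := lt_of_le_of_lt hu (by
    rw [inv_lt_one_iff₀]; right
    exact_mod_cast (Fact.out : p.Prime).one_lt)
  refine ⟨hu, ?_⟩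
  have hx : ‖-((B - A) / B)‖ < 1 := by rwa [norm_neg]
  have := hlog _ hx
  have heq : (1 : K) + -((B - A) / B) = A / B := by
    field_simp
    ring
  rw [heq] at this
  have hterm : ∀ k : ℕ, (-1:K) ^ k * (-((B - A) / B)) ^ (k + 1) / ((k + 1 : ℕ) : K)
      = -(((B - A) / B) ^ (k + 1) / ((k + 1 : ℕ) : K)) := by
    intro k
    rw [neg_pow ((B - A) / B) (k + 1), ← mul_assoc, ← pow_add]
    have hodd' : Odd (k + (k + 1)) := ⟨k, by ring⟩
    rw [hodd'.neg_one_pow]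
    ring
  simpa only [hterm] using this
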